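/- Let Z be a set of nine points in the complex projective plane such that every line meeting Z in at least two points contains exactly three points of Z. Then for every 3-rich line M, there exist two other distinct 3-rich lines M' and M'' such that M ∩ M' is not a point of Z and M ∩ M'' is not a point of Z. -/

import Mathlib

open MvPolynomial

noncomputable section

abbrev P2 := Projectivization ℂ (Fin 3 → ℂ)

/-- A projective line in `P2`, given as the zero set of a nonzero linear form. -/
def IsLine (S : Set P2) : Prop :=
  ∃ f : (Fin 3 → ℂ) →ₗ[ℂ] ℂ, f ≠ 0 ∧ S = {p : P2 | f p.rep = 0}

/-- Three points of `P2` are collinear if some line contains all of them. -/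
def Collinear3 (p q r : P2) : Prop :=
  ∃ S : Set P2, IsLine S ∧ p ∈ S ∧ q ∈ S ∧ r ∈ S

/-- A point of `P2` from homogeneous coordinates. -/
def pt (v : Fin 3 → ℂ) (h : v ≠ 0) : P2 := Projectivization.mk ℂ v h

/-- Two sets of points of `P2` are projectively equivalent if a linear automorphism
of `ℂ³` carries one onto the other. -/
def ProjEquiv (A B : Set P2) : Prop :=
  ∃ g : (Fin 3 → ℂ) ≃ₗ[ℂ] (Fin 3 → ℂ),
    B = Projectivization.map (g : (Fin 3 → ℂ) →ₗ[ℂ] (Fin 3 → ℂ)) g.injective '' A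

lemma rep_indep {p q : P2} (hpq : p ≠ q) :
    LinearIndependent ℂ ![p.rep, q.rep] := by
  rw [LinearIndependent.pair_iff' p.rep_nonzero]
  intro a ha
  apply hpq
  have ha0 : a ≠ 0 := by
    rintro rfl; exact q.rep_nonzero (by simpa using ha.symm)
  have : Projectivization.mk ℂ p.rep p.rep_nonzero
      = Projectivization.mk ℂ q.rep q.rep_nonzero := by
    rw [Projectivization.mk_eq_mk_iff]
    refine ⟨(Units.mk0 a ha0)⁻¹, ?_⟩
    rw [← ha, Units.smul_def, smul_smul]
    simp [inv_mul_cancel₀ ha0]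
  simpa [Projectivization.mk_rep] using this

lemma exists_line_through (p q : P2) : ∃ S : Set P2, IsLine S ∧ p ∈ S ∧ q ∈ S := by
  set W : Submodule ℂ (Fin 3 → ℂ) :=
    Submodule.span ℂ (Set.range ![p.rep, q.rep]) with hW
  have hWlt : W < ⊤ := by
    rw [lt_top_iff_ne_top]
    intro h
    have h1 : Module.finrank ℂ W ≤ 2 := by
      classical
      refine le_trans (finrank_span_le_card (R := ℂ) (Set.range ![p.rep, q.rep])) ?_
      rw [Set.toFinset_card]
      exact le_trans (Fintype.card_range_le _) (by simp)
    rw [h] at h1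
    have h2 : Module.finrank ℂ (⊤ : Submodule ℂ (Fin 3 → ℂ)) = 3 := by
      simp [finrank_top]
    omega
  obtain ⟨f, hf0, hfW⟩ := Submodule.exists_dual_map_eq_bot_of_lt_top hWlt inferInstance
  have hmem : ∀ v, v ∈ W → f v = 0 := by
    intro v hv
    have h := Submodule.mem_map_of_mem (f := f) hv
    rw [hfW, Submodule.mem_bot] at h
    exact h
  exact ⟨{x : P2 | f x.rep = 0}, ⟨f, hf0, rfl⟩,
    hmem _ (Submodule.subset_span ⟨0, rfl⟩), hmem _ (Submodule.subset_span ⟨1, rfl⟩)⟩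

lemma ker_eq_span {p q : P2} (hpq : p ≠ q) (f : (Fin 3 → ℂ) →ₗ[ℂ] ℂ) (hf : f ≠ 0)
    (hp : f p.rep = 0) (hq : f q.rep = 0) :
    LinearMap.ker f = Submodule.span ℂ (Set.range ![p.rep, q.rep]) := by
  have hind := rep_indep hpq
  have hle : Submodule.span ℂ (Set.range ![p.rep, q.rep]) ≤ LinearMap.ker f := by
    rw [Submodule.span_le, Set.range_subset_iff]
    intro i
    fin_cases i <;> simp [hp, hq]
  have hsp : Module.finrank ℂ (Submodule.span ℂ (Set.range ![p.rep, q.rep])) = 2 := by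
    simpa using finrank_span_eq_card hind
  have hrank : Module.finrank ℂ (LinearMap.ker f) ≤ 2 := by
    have h1 := LinearMap.finrank_range_add_finrank_ker f
    have h2 : Module.finrank ℂ (LinearMap.range f) = 1 := by
      have : LinearMap.range f = ⊤ := by
        rw [LinearMap.range_eq_top]
        intro c
        obtain ⟨x, hx⟩ : ∃ x, f x ≠ 0 := by
          by_contra h; push_neg at h; exact hf (by ext x; simp [h])
        exact ⟨(c / f x) • x, by rw [map_smul, smul_eq_mul, div_mul_cancel₀ c hx]⟩
      rw [this, finrank_top]; simp
    have h3 : Module.finrank ℂ (Fin 3 → ℂ) = 3 := by simp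
    omega
  exact (Submodule.eq_of_le_of_finrank_le hle (by omega)).symm

lemma line_unique {p q : P2} (hpq : p ≠ q) {S T : Set P2}
    (hS : IsLine S) (hT : IsLine T) (hpS : p ∈ S) (hqS : q ∈ S)
    (hpT : p ∈ T) (hqT : q ∈ T) : S = T := by
  obtain ⟨f, hf0, rfl⟩ := hS
  obtain ⟨g, hg0, rfl⟩ := hT
  simp only [Set.mem_setOf_eq] at hpS hqS hpT hqT
  have h1 := ker_eq_span hpq f hf0 hpS hqS
  have h2 := ker_eq_span hpq g hg0 hpT hqT
  ext x
  simp only [Set.mem_setOf_eq, ← LinearMap.mem_ker, h1, h2]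

lemma key (Z : Set P2) (hfin : Z.Finite) (hcard : Z.ncard = 9)
    (h3 : ∀ S : Set P2, IsLine S → 2 ≤ (Z ∩ S).ncard → (Z ∩ S).ncard = 3)
    (M : Set P2) (hM3 : (Z ∩ M).ncard = 3)
    (z : P2) (hz : z ∈ Z) (hzM : z ∉ M) :
    ∃ L, IsLine L ∧ (Z ∩ L).ncard = 3 ∧ z ∈ L ∧ Z ∩ M ∩ L = ∅ := by
  -- any line through two distinct points of Z is 3-rich
  have rich : ∀ (a b : P2), a ∈ Z → b ∈ Z → a ≠ b →
      ∃ L, IsLine L ∧ (Z ∩ L).ncard = 3 ∧ a ∈ L ∧ b ∈ L := by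
    intro a b ha hb hab
    obtain ⟨L, hL, haL, hbL⟩ := exists_line_through a b
    refine ⟨L, hL, h3 L hL ?_, haL, hbL⟩
    have hsub : {a, b} ⊆ Z ∩ L := by
      rintro x (rfl | rfl) <;> simp_all
    calc 2 = ({a, b} : Set P2).ncard := (Set.ncard_pair hab).symm
    _ ≤ (Z ∩ L).ncard := Set.ncard_le_ncard hsub (hfin.inter_of_left _)
  obtain ⟨p1, p2, p3, h12, h13, h23, hZM⟩ := Set.ncard_eq_three.mp hM3
  have hp1 : p1 ∈ Z ∩ M := by rw [hZM]; simp
  have hp2 : p2 ∈ Z ∩ M := by rw [hZM]; simp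
  have hp3 : p3 ∈ Z ∩ M := by rw [hZM]; simp
  have hzp : ∀ p, p ∈ Z ∩ M → z ≠ p := fun p hp h => hzM (h ▸ hp.2)
  obtain ⟨L1, hL1, hL1c, hzL1, hpL1⟩ := rich z p1 hz hp1.1 (hzp _ hp1)
  obtain ⟨L2, hL2, hL2c, hzL2, hpL2⟩ := rich z p2 hz hp2.1 (hzp _ hp2)
  obtain ⟨L3, hL3, hL3c, hzL3, hpL3⟩ := rich z p3 hz hp3.1 (hzp _ hp3)
  -- find w in Z outside the three lines
  have hUcard : ((Z ∩ L1) ∪ ((Z ∩ L2) \ {z}) ∪ ((Z ∩ L3) \ {z})).ncard ≤ 7 := by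
    have f1 : (Z ∩ L1).Finite := hfin.inter_of_left _
    have f2 : ((Z ∩ L2) \ {z}).Finite := (hfin.inter_of_left _).diff
    have f3 : ((Z ∩ L3) \ {z}).Finite := (hfin.inter_of_left _).diff
    have c2 : ((Z ∩ L2) \ {z}).ncard = 2 := by
      rw [Set.ncard_diff_singleton_of_mem (Set.mem_inter hz hzL2), hL2c]
    have c3 : ((Z ∩ L3) \ {z}).ncard = 2 := by
      rw [Set.ncard_diff_singleton_of_mem (Set.mem_inter hz hzL3), hL3c]
    calc ((Z ∩ L1) ∪ ((Z ∩ L2) \ {z}) ∪ ((Z ∩ L3) \ {z})).ncard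
        ≤ ((Z ∩ L1) ∪ ((Z ∩ L2) \ {z})).ncard + ((Z ∩ L3) \ {z}).ncard :=
          Set.ncard_union_le _ _
      _ ≤ (Z ∩ L1).ncard + ((Z ∩ L2) \ {z}).ncard + ((Z ∩ L3) \ {z}).ncard := by
          have := Set.ncard_union_le (Z ∩ L1) ((Z ∩ L2) \ {z})
          omega
      _ ≤ 7 := by rw [hL1c, c2, c3]
  obtain ⟨w, hwZ, hw⟩ : ∃ w ∈ Z, w ∉ L1 ∧ w ∉ L2 ∧ w ∉ L3 := by
    by_contra hcon
    push_neg at hcon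
    have hsub : Z ⊆ (Z ∩ L1) ∪ ((Z ∩ L2) \ {z}) ∪ ((Z ∩ L3) \ {z}) := by
      intro x hx
      rcases eq_or_ne x z with rfl | hxz
      · exact Or.inl (Or.inl ⟨hx, hzL1⟩)
      rcases Classical.em (x ∈ L1) with h | h
      · exact Or.inl (Or.inl ⟨hx, h⟩)
      rcases Classical.em (x ∈ L2) with h2 | h2
      · exact Or.inl (Or.inr ⟨⟨hx, h2⟩, hxz⟩)
      · exact Or.inr ⟨⟨hx, hcon x hx h h2⟩, hxz⟩
    have := Set.ncard_le_ncard hsub (((hfin.inter_of_left _).union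
      ((hfin.inter_of_left _).diff)).union ((hfin.inter_of_left _).diff))
    omega
  have hzw : z ≠ w := fun h => hw.1 (h ▸ hzL1)
  obtain ⟨L, hL, hLc, hzL, hwL⟩ := rich z w hz hwZ hzw
  refine ⟨L, hL, hLc, hzL, ?_⟩
  ext x
  simp only [Set.mem_inter_iff, Set.mem_empty_iff_false, iff_false, not_and, and_imp]
  intro hxZ hxM hxL
  have hxZM : x ∈ Z ∩ M := ⟨hxZ, hxM⟩
  have hxZM' : x ∈ ({p1, p2, p3} : Set P2) := hZM ▸ hxZM
  have hzx : z ≠ x := hzp x hxZM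
  rcases hxZM' with rfl | rfl | rfl
  · exact hw.1 (line_unique hzx hL hL1 hzL hxL hzL1 hpL1 ▸ hwL)
  · exact hw.2.1 (line_unique hzx hL hL2 hzL hxL hzL2 hpL2 ▸ hwL)
  · exact hw.2.2 (line_unique hzx hL hL3 hzL hxL hzL3 hpL3 ▸ hwL)


/-- For every 3-rich line `M` of a 9-point set all of whose connecting lines are
3-rich, there are two other distinct 3-rich lines meeting `M` outside of `Z`. -/
theorem stmt2 (Z : Set P2) (hfin : Z.Finite) (hcard : Z.ncard = 9)
    (h3 : ∀ S : Set P2, IsLine S → 2 ≤ (Z ∩ S).ncard → (Z ∩ S).ncard = 3) :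
    ∀ M : Set P2, IsLine M → (Z ∩ M).ncard = 3 →
      ∃ M' M'' : Set P2, IsLine M' ∧ (Z ∩ M').ncard = 3 ∧
        IsLine M'' ∧ (Z ∩ M'').ncard = 3 ∧
        M' ≠ M ∧ M'' ≠ M ∧ M' ≠ M'' ∧
        Z ∩ (M ∩ M') = ∅ ∧ Z ∩ (M ∩ M'') = ∅ := by
  intro M hM hM3
  obtain ⟨z1, hz1Z, hz1M⟩ : ∃ z ∈ Z, z ∉ M := by
    by_contra h
    push_neg at h
    have : Z ∩ M = Z := Set.inter_eq_self_of_subset_left h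
    rw [this, hcard] at hM3
    omega
  obtain ⟨M', hM', hM'c, hz1M', hMM'⟩ := key Z hfin hcard h3 M hM3 z1 hz1Z hz1M
  obtain ⟨z2, hz2Z, hz2M, hz2M'⟩ : ∃ z ∈ Z, z ∉ M ∧ z ∉ M' := by
    by_contra h
    push_neg at h
    have hsub : Z ⊆ (Z ∩ M) ∪ (Z ∩ M') := by
      intro x hx
      rcases Classical.em (x ∈ M) with hm | hm
      · exact Or.inl ⟨hx, hm⟩
      · exact Or.inr ⟨hx, h x hx hm⟩
    have h1 := Set.ncard_le_ncard hsub ((hfin.inter_of_left _).union (hfin.inter_of_left _))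
    have h2 := Set.ncard_union_le (Z ∩ M) (Z ∩ M')
    omega
  obtain ⟨M'', hM'', hM''c, hz2M'', hMM''⟩ := key Z hfin hcard h3 M hM3 z2 hz2Z hz2M
  refine ⟨M', M'', hM', hM'c, hM'', hM''c, ?_, ?_, ?_, ?_, ?_⟩
  · exact fun h => hz1M (h ▸ hz1M')
  · exact fun h => hz2M (h ▸ hz2M'')
  · exact fun h => hz2M' (h ▸ hz2M'')
  · rw [← Set.inter_assoc]; exact hMM'
  · rw [← Set.inter_assoc]; exact hMM''
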